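/- Let a, b ∈ ℕ and let L be the 2×2 matrix with zero diagonal and off-diagonal entries a and b. Then a positive integer vector (d₁, d₂) satisfies that Diag(d₁,d₂) − L is an almost non-singular M-matrix if and only if d₁d₂ ≥ ab. Consequently, the set of minimal such vectors equals the set of minimal elements of { (d, max(1, ⌈ab/d⌉)) : d ∈ ℕ₊, d ≤ max(1, ab) }. -/
import Mathlib


/-- The principal minor of an integer matrix indexed by the subset `s`. -/
def principalMinorZ {n : ℕ} (M : Matrix (Fin n) (Fin n) ℤ)
    (s : Finset (Fin n)) : ℤ :=
  (M.submatrix (fun i : s => (i : Fin n)) (fun j : s => (j : Fin n))).det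

/-- `M` is an almost non-singular M-matrix: all proper principal minors are
positive and the determinant is non-negative. -/
def AlmostNSM {n : ℕ} (M : Matrix (Fin n) (Fin n) ℤ) : Prop :=
  (∀ s : Finset (Fin n), s ≠ Finset.univ → 0 < principalMinorZ M s) ∧ 0 ≤ M.det

lemma pm_singleton (M : Matrix (Fin 2) (Fin 2) ℤ) (i : Fin 2) :
    principalMinorZ M {i} = M i i := by
  haveI : Subsingleton (({i} : Finset (Fin 2)) : Type) := by
    constructor; rintro ⟨x, hx⟩ ⟨y, hy⟩
    simp only [Finset.mem_singleton] at hx hy; subst hx; subst hy; rfl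
  rw [principalMinorZ, Matrix.det_eq_elem_of_subsingleton _ ⟨i, Finset.mem_singleton_self i⟩,
    Matrix.submatrix_apply]

lemma ansm_iff (a b : ℕ) (d₁ d₂ : ℤ) (h₁ : 0 < d₁) (h₂ : 0 < d₂) :
    AlmostNSM (Matrix.diagonal ![d₁, d₂] - !![0, (a : ℤ); (b : ℤ), 0]) ↔
      (a : ℤ) * b ≤ d₁ * d₂ := by
  have hdet : (Matrix.diagonal ![d₁, d₂] - !![0, (a:ℤ); (b:ℤ), 0]).det = d₁ * d₂ - a * b := by
    rw [Matrix.det_fin_two]; simp [Matrix.diagonal]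
  constructor
  · rintro ⟨-, hd⟩; rw [hdet] at hd; linarith
  · intro h
    refine ⟨fun s hs => ?_, by rw [hdet]; linarith⟩
    have : s = ∅ ∨ s = {0} ∨ s = {1} ∨ s = Finset.univ := by revert s; decide
    rcases this with rfl | rfl | rfl | rfl
    · haveI : IsEmpty ((∅ : Finset (Fin 2)) : Type) :=
        ⟨fun x => absurd x.2 (Finset.notMem_empty _)⟩
      rw [principalMinorZ, Matrix.det_isEmpty]; norm_num
    · rw [pm_singleton]; simpa [Matrix.diagonal] using h₁
    · rw [pm_singleton]; simpa [Matrix.diagonal] using h₂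
    · exact absurd rfl hs

lemma ceil_key (m d e : ℤ) (hd : 0 < d) :
    ⌈(m : ℚ) / (d : ℚ)⌉ ≤ e ↔ m ≤ d * e := by
  rw [Int.ceil_le, div_le_iff₀ (by exact_mod_cast hd), ← Int.cast_mul, Int.cast_le, mul_comm]

lemma min_eq {α : Type*} [PartialOrder α] (S T : α → Prop) (hTS : ∀ p, T p → S p)
    (hdom : ∀ p, S p → ∃ t, T t ∧ t ≤ p) :
    {p | S p ∧ ∀ q, S q → q ≤ p → q = p} = {p | T p ∧ ∀ q, T q → q ≤ p → q = p} := by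
  ext p; constructor
  · rintro ⟨hS, hmin⟩
    obtain ⟨t, hT, hle⟩ := hdom p hS
    have ht : t = p := hmin t (hTS t hT) hle
    subst ht
    exact ⟨hT, fun q hq hle' => hmin q (hTS q hq) hle'⟩
  · rintro ⟨hT, hmin⟩
    refine ⟨hTS p hT, fun q hq hle => ?_⟩
    obtain ⟨t, htT, htle⟩ := hdom q hq
    have ht : t = p := hmin t htT (htle.trans hle)
    exact le_antisymm hle (ht ▸ htle)

/-- the base case for 2×2 matrices. -/
theorem stmt_12 (a b : ℕ) :
    (∀ d₁ d₂ : ℤ, 0 < d₁ → 0 < d₂ →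
      (AlmostNSM (Matrix.diagonal ![d₁, d₂] - !![0, (a : ℤ); (b : ℤ), 0]) ↔
        (a : ℤ) * b ≤ d₁ * d₂)) ∧
    {p : ℤ × ℤ | (0 < p.1 ∧ 0 < p.2 ∧
        AlmostNSM (Matrix.diagonal ![p.1, p.2] - !![0, (a : ℤ); (b : ℤ), 0])) ∧
      ∀ q : ℤ × ℤ, (0 < q.1 ∧ 0 < q.2 ∧
        AlmostNSM (Matrix.diagonal ![q.1, q.2] - !![0, (a : ℤ); (b : ℤ), 0])) →
        q ≤ p → q = p} =
    {p : ℤ × ℤ | (∃ d : ℤ, 0 < d ∧ d ≤ max 1 ((a : ℤ) * b) ∧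
        p = (d, max 1 ⌈((a : ℚ) * b) / (d : ℚ)⌉)) ∧
      ∀ q : ℤ × ℤ, (∃ d : ℤ, 0 < d ∧ d ≤ max 1 ((a : ℤ) * b) ∧
        q = (d, max 1 ⌈((a : ℚ) * b) / (d : ℚ)⌉)) → q ≤ p → q = p} := by
  have hcast : ∀ d : ℤ, (((a : ℤ) * b : ℤ) : ℚ) / (d : ℚ) = ((a : ℚ) * b) / (d : ℚ) := by
    intro d; push_cast; ring
  refine ⟨fun d₁ d₂ h₁ h₂ => ansm_iff a b d₁ d₂ h₁ h₂, ?_⟩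
  apply min_eq
  · -- T ⊆ S
    rintro p ⟨d, hd, -, rfl⟩
    have hc : (1 : ℤ) ≤ max 1 ⌈((a : ℚ) * b) / (d : ℚ)⌉ := le_max_left _ _
    refine ⟨hd, by linarith, ?_⟩
    rw [ansm_iff a b _ _ hd (by linarith)]
    have := (ceil_key ((a : ℤ) * b) d (max 1 ⌈((a : ℚ) * b) / (d : ℚ)⌉) hd).mp
    rw [hcast d] at this
    exact this (le_max_right _ _)
  · -- every element of S dominates an element of T
    rintro p ⟨h₁, h₂, hM⟩
    rw [ansm_iff a b _ _ h₁ h₂] at hM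
    set d := min p.1 (max 1 ((a : ℤ) * b)) with hdd
    have hd : 0 < d := lt_min h₁ (by positivity)
    refine ⟨(d, max 1 ⌈((a : ℚ) * b) / (d : ℚ)⌉), ⟨d, hd, min_le_right _ _, rfl⟩, ?_⟩
    have hab : (a : ℤ) * b ≤ d * p.2 := by
      rcases min_cases p.1 (max 1 ((a : ℤ) * b)) with ⟨he, -⟩ | ⟨he, hlt⟩
      · rw [hdd, he]; exact hM
      · have h1 : (a : ℤ) * b ≤ d := by rw [hdd, he]; exact le_max_right _ _
        nlinarith
    have hc : ⌈((a : ℚ) * b) / (d : ℚ)⌉ ≤ p.2 := by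
      rw [← hcast d, ceil_key _ _ _ hd]; exact hab
    exact ⟨min_le_left _ _, max_le h₂ hc⟩
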